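/- arXiv:2009.10775 — 2 statements merged into one kernel-verified Lean document; each statement's English description precedes it below -/
import Mathlib

section
/- For the semi-discrete structure update ρ s ε (d̊ⁿ - d̊ⁿ⁻¹)/τ + L d ⁿ = gⁿ with dⁿ = dⁿ⁻¹ + τ d̊ⁿ, where L is a self-adjoint positive semidefinite operator on a real inner product space, taking the inner product with d̊ⁿ yields the discrete energy inequality: (ρ s ε/2)|d̊ⁿ|² + (1/2)(L dⁿ, dⁿ) ≤ (ρ s ε/2)|d̊ⁿ⁻¹|² + (1/2)(L dⁿ⁻¹, dⁿ⁻¹) + τ (gⁿ, d̊ⁿ). -/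
theorem structure_update_energy_inequality
    {H : Type*} [NormedAddCommGroup H] [InnerProductSpace ℝ H]
    (ρsε τ : ℝ) (hρ : 0 < ρsε) (hτ : 0 < τ)
    (L : H →ₗ[ℝ] H)
    (hsym : ∀ x y : H, inner ℝ (L x) y = (inner ℝ x (L y) : ℝ))
    (hpsd : ∀ x : H, (0 : ℝ) ≤ inner ℝ (L x) x)
    (dvprev dprev dvn dn g : H)
    (heq : (ρsε / τ) • (dvn - dvprev) + L dn = g)
    (hd : dn = dprev + τ • dvn) :
    ρsε / 2 * ‖dvn‖ ^ 2 + 1 / 2 * (inner ℝ (L dn) dn : ℝ) ≤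
      ρsε / 2 * ‖dvprev‖ ^ 2 + 1 / 2 * (inner ℝ (L dprev) dprev : ℝ)
        + τ * (inner ℝ g dvn : ℝ) := by
  have h1 : (ρsε / τ) * ((inner ℝ dvn dvn : ℝ) - inner ℝ dvprev dvn)
      + (inner ℝ (L dn) dvn : ℝ) = inner ℝ g dvn := by
    have := congrArg (fun x => (inner ℝ x dvn : ℝ)) heq
    simpa [inner_add_left, inner_sub_left, real_inner_smul_left, mul_sub] using this
  -- τ • dvn = dn - dprev
  have hτd : τ • dvn = dn - dprev := by rw [hd]; abel
  have h2 : τ * (inner ℝ (L dn) dvn : ℝ)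
      = (inner ℝ (L dn) dn : ℝ) - inner ℝ (L dn) dprev := by
    have : (inner ℝ (L dn) (τ • dvn) : ℝ) = inner ℝ (L dn) (dn - dprev) := by rw [hτd]
    simpa [real_inner_smul_right, inner_sub_right] using this
  -- positive semidefiniteness of L at dn - dprev
  have h3 : (0:ℝ) ≤ (inner ℝ (L dn) dn : ℝ) - 2 * inner ℝ (L dn) dprev
      + inner ℝ (L dprev) dprev := by
    have h := hpsd (dn - dprev)
    have hc : (inner ℝ (L dn) dprev : ℝ) = inner ℝ (L dprev) dn := by
      rw [hsym dn dprev, real_inner_comm]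
    have hd2 : (inner ℝ (L dn) dprev : ℝ) = inner ℝ (L dprev) dn := hc
    simp only [map_sub, inner_sub_left, inner_sub_right] at h
    linarith [h, hd2]
  -- Cauchy-type bound: 2⟨dvprev, dvn⟩ ≤ ‖dvprev‖² + ‖dvn‖²
  have h4 : 2 * (inner ℝ dvprev dvn : ℝ) ≤ ‖dvprev‖^2 + ‖dvn‖^2 := by
    nlinarith [real_inner_le_norm dvprev dvn, sq_nonneg (‖dvprev‖ - ‖dvn‖)]
  have hvv : (inner ℝ dvn dvn : ℝ) = ‖dvn‖^2 := real_inner_self_eq_norm_sq dvn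
  -- multiply h1 by τ
  have h5 : ρsε * ((inner ℝ dvn dvn : ℝ) - inner ℝ dvprev dvn)
      + τ * (inner ℝ (L dn) dvn : ℝ) = τ * inner ℝ g dvn := by
    have := congrArg (fun r => τ * r) h1
    field_simp at this ⊢
    nlinarith [this]
  nlinarith [h5, h2, h3, h4, hvv, hρ.le]
end

section
/- If gⁿ = 0 for all n in the previous structure update, then the discrete energy Eⁿ := (ρsε/2)|d̊ⁿ|² + (1/2)(L dⁿ, dⁿ) is nonincreasing in n; hence the scheme is unconditionally stable for any τ > 0. -/
theorem structure_scheme_unconditional_stability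
    {H : Type*} [NormedAddCommGroup H] [InnerProductSpace ℝ H]
    (ρsε τ : ℝ) (hρ : 0 < ρsε) (hτ : 0 < τ)
    (L : H →ₗ[ℝ] H)
    (hsym : ∀ x y : H, inner ℝ (L x) y = (inner ℝ x (L y) : ℝ))
    (hpsd : ∀ x : H, (0 : ℝ) ≤ inner ℝ (L x) x)
    (d dv : ℕ → H)
    (heq : ∀ n : ℕ, 1 ≤ n → (ρsε / τ) • (dv n - dv (n - 1)) + L (d n) = 0)
    (hd : ∀ n : ℕ, 1 ≤ n → d n = d (n - 1) + τ • dv n)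
    (E : ℕ → ℝ)
    (hE : ∀ n, E n = ρsε / 2 * ‖dv n‖ ^ 2 + 1 / 2 * (inner ℝ (L (d n)) (d n) : ℝ)) :
    ∀ n : ℕ, 1 ≤ n → E n ≤ E (n - 1) := by
  intro n hn
  set v := dv n with hv
  set w := dv (n - 1) with hw
  set a := d n with ha
  set b := d (n - 1) with hb
  have hτ' : τ ≠ 0 := ne_of_gt hτ
  have hLa : L a = -((ρsε / τ) • (v - w)) := eq_neg_of_add_eq_zero_right (heq n hn)
  have hda : a = b + τ • v := hd n hn
  -- ⟪L a, v⟫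
  have hLav : (inner ℝ (L a) v : ℝ) = -(ρsε / τ) * ((inner ℝ v v : ℝ) - (inner ℝ w v : ℝ)) := by
    rw [hLa, inner_neg_left, real_inner_smul_left, inner_sub_left]
    ring
  -- symmetry for b, v
  have hbv : (inner ℝ (L b) v : ℝ) = (inner ℝ (L v) b : ℝ) := by
    rw [hsym b v, real_inner_comm]
  -- ⟪L a, a⟫ expansion
  have hLaa : (inner ℝ (L a) a : ℝ) =
      (inner ℝ (L b) b : ℝ) + 2 * τ * (inner ℝ (L b) v : ℝ) + τ ^ 2 * (inner ℝ (L v) v : ℝ) := by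
    rw [hda, map_add, map_smul, inner_add_left, inner_add_right, inner_add_right,
      inner_smul_left, inner_smul_right, inner_smul_left, inner_smul_right, hbv]
    simp only [starRingEnd_apply, star_trivial]
    ring
  -- ⟪L a, v⟫ in terms of ⟪L b, v⟫
  have hLav2 : (inner ℝ (L a) v : ℝ) = (inner ℝ (L b) v : ℝ) + τ * (inner ℝ (L v) v : ℝ) := by
    rw [hda, map_add, map_smul, inner_add_left, inner_smul_left]
    simp only [starRingEnd_apply, star_trivial]

  have hρτ : τ * (ρsε / τ) = ρsε := by field_simp
  have hnorm : ‖v - w‖ ^ 2 = ‖v‖ ^ 2 - 2 * (inner ℝ v w : ℝ) + ‖w‖ ^ 2 := by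
    rw [norm_sub_sq_real]
  have hwv : (inner ℝ w v : ℝ) = (inner ℝ v w : ℝ) := real_inner_comm v w
  have hns : (0 : ℝ) ≤ ‖v - w‖ ^ 2 := sq_nonneg _
  have hLvv : (0 : ℝ) ≤ (inner ℝ (L v) v : ℝ) := hpsd v
  have hE1 := hE n
  have hE2 := hE (n - 1)
  have hLbv : τ * (inner ℝ (L b) v : ℝ) = τ * (inner ℝ (L a) v : ℝ) - τ ^ 2 * (inner ℝ (L v) v : ℝ) := by
    rw [hLav2]; ring
  have key : τ * (inner ℝ (L a) v : ℝ) = -ρsε * ((inner ℝ v v : ℝ) - (inner ℝ w v : ℝ)) := by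
    rw [hLav]
    field_simp
  have hvv : (inner ℝ v v : ℝ) = ‖v‖ ^ 2 := real_inner_self_eq_norm_sq v
  have hww : (inner ℝ w w : ℝ) = ‖w‖ ^ 2 := real_inner_self_eq_norm_sq w
  nlinarith [mul_nonneg (le_of_lt hρ) hns, mul_nonneg (sq_nonneg τ) hLvv]
end
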